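/- The join operation is associative up to homeomorphism for compact Hausdorff spaces: (X * Y) * Z is homeomorphic to X * (Y * Z). -/

import Mathlib

open scoped unitInterval

noncomputable section

/-- The `n`-dimensional sphere, as the unit sphere in `ℝ^(n+1)`. -/
abbrev Sphere (n : ℕ) : Type :=
  Metric.sphere (0 : EuclideanSpace ℝ (Fin (n + 1))) 1

/-- A chosen base point on the `n`-sphere. -/
def spherePt (n : ℕ) : Sphere n :=
  ⟨EuclideanSpace.single (0 : Fin (n + 1)) (1 : ℝ), by
    simp [EuclideanSpace.norm_single]⟩

/-- Generating relation for the topological join: the quotient of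
`X ⊕ (X × Y × [0,1]) ⊕ Y` where `(x,y,0)` is glued to `x` and `(x,y,1)` to `y`.
(When one factor is empty this yields the other factor.) -/
inductive JoinRel (X Y : Type) [TopologicalSpace X] [TopologicalSpace Y] :
    X ⊕ (X × Y × I) ⊕ Y → X ⊕ (X × Y × I) ⊕ Y → Prop
  | left (x : X) (y : Y) : JoinRel X Y (Sum.inl x) (Sum.inr (Sum.inl (x, y, 0)))
  | right (x : X) (y : Y) : JoinRel X Y (Sum.inr (Sum.inr y)) (Sum.inr (Sum.inl (x, y, 1)))

/-- The topological join `X * Y`. -/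
def Join (X Y : Type) [TopologicalSpace X] [TopologicalSpace Y] : Type :=
  Quot (JoinRel X Y)

instance (X Y : Type) [TopologicalSpace X] [TopologicalSpace Y] :
    TopologicalSpace (Join X Y) := by
  unfold Join; infer_instance

/-- The canonical inclusion of `X` into the join `X * Y`. -/
def Join.inl {X Y : Type} [TopologicalSpace X] [TopologicalSpace Y] (x : X) : Join X Y :=
  Quot.mk _ (Sum.inl x)

/-- The wedge (one-point union) of a family of pointed spaces. -/
def Wedge {ι : Type} (X : ι → Type) [∀ i, TopologicalSpace (X i)] (b : ∀ i, X i) : Type :=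
  Quot (fun p q : Σ i, X i => p.2 = b p.1 ∧ q.2 = b q.1)

instance {ι : Type} (X : ι → Type) [∀ i, TopologicalSpace (X i)] (b : ∀ i, X i) :
    TopologicalSpace (Wedge X b) := by
  unfold Wedge; infer_instance

/-- An abstract simplicial complex on vertex set `V` (empty face excluded). -/
structure AbsSimplicialComplex (V : Type) where
  faces : Set (Finset V)
  not_empty_mem : ∅ ∉ faces
  down_closed : ∀ s ∈ faces, ∀ t ⊆ s, t.Nonempty → t ∈ faces

/-- The geometric realization of an abstract simplicial complex. -/
def realization {V : Type} (K : AbsSimplicialComplex V) : Type :=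
  {f : V → ℝ // (∀ v, 0 ≤ f v) ∧
    ∃ s ∈ K.faces, (∀ v, f v ≠ 0 → v ∈ s) ∧ ∑ v ∈ s, f v = 1}

instance {V : Type} (K : AbsSimplicialComplex V) : TopologicalSpace (realization K) := by
  unfold realization; infer_instance

/-- The order complex of a partial order: simplices are the finite nonempty chains. -/
def orderComplex (P : Type) [PartialOrder P] : AbsSimplicialComplex P where
  faces := {s | s.Nonempty ∧ IsChain (· ≤ ·) (s : Set P)}
  not_empty_mem := by rintro ⟨h, -⟩; exact h.ne_empty rfl
  down_closed := by
    rintro s ⟨-, hc⟩ t hts htne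
    exact ⟨htne, hc.mono (Finset.coe_subset.2 hts)⟩

set_option synthInstance.maxHeartbeats 1000000
set_option maxHeartbeats 1000000

namespace JA

variable (X : Type) [TopologicalSpace X]

/-- A point of the cone on `X`, at height `a`, over `x`. -/
def cpt (a : ℝ) (x : X) : ℝ × (C(X, I) → ℝ) := (a, fun f => a * (f x : ℝ))

@[simp] lemma cpt_fst (a : ℝ) (x : X) : (cpt X a x).1 = a := rfl

@[simp] lemma cpt_zero (x : X) : cpt X 0 x = 0 := by
  simp [cpt, Prod.ext_iff]
  rfl

lemma smul_cpt (c a : ℝ) (x : X) : c • cpt X a x = cpt X (c * a) x := by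
  simp [cpt, Prod.ext_iff, funext_iff, smul_eq_mul, mul_assoc]

@[simp] lemma cpt_one_sub_coe (x : X) : cpt X (1 - ((0:I):ℝ)) x = cpt X 1 x := by norm_num

/-- Membership in the (set-level) cone on `X`. -/
def InCone (p : ℝ × (C(X, I) → ℝ)) : Prop :=
  p = 0 ∨ ∃ a x, 0 ≤ a ∧ p = cpt X a x

lemma InCone.zero : InCone X (0 : ℝ × (C(X, I) → ℝ)) := Or.inl rfl

lemma InCone.fst_nonneg {p} (h : InCone X p) : 0 ≤ p.1 := by
  rcases h with rfl | ⟨a, x, ha, rfl⟩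
  · simp
  · simpa using ha

lemma InCone.smul {p} (h : InCone X p) {c : ℝ} (hc : 0 ≤ c) : InCone X (c • p) := by
  rcases h with rfl | ⟨a, x, ha, rfl⟩
  · simp [InCone]
  · exact Or.inr ⟨c * a, x, mul_nonneg hc ha, smul_cpt X c a x⟩

lemma InCone.eq_zero {p} (h : InCone X p) (h1 : p.1 = 0) : p = 0 := by
  rcases h with rfl | ⟨a, x, ha, rfl⟩
  · rfl
  · simp only [cpt_fst] at h1
    subst h1; simp

lemma continuous_cpt : Continuous (fun q : ℝ × X => cpt X q.1 q.2) := by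
  refine Continuous.prodMk continuous_fst (continuous_pi fun f => ?_)
  exact continuous_fst.mul ((continuous_subtype_val.comp f.continuous).comp continuous_snd)

variable {X} in
lemma eq_of_forall_apply [CompactSpace X] [T2Space X] {x x' : X}
    (h : ∀ f : C(X, I), f x = f x') : x = x' := by
  by_contra hne
  obtain ⟨f, h0, h1, hmem⟩ := exists_continuous_zero_one_of_isClosed
    (isClosed_singleton (x := x)) (isClosed_singleton (x := x'))
    (Set.disjoint_singleton.2 hne)
  have hg := h ⟨fun y => ⟨f y, hmem y⟩, f.continuous.subtype_mk _⟩
  have hx : f x = 0 := h0 rfl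
  have hx' : f x' = 1 := h1 rfl
  rw [Subtype.ext_iff] at hg
  simp only [ContinuousMap.coe_mk] at hg
  rw [hx, hx'] at hg
  norm_num at hg

variable {X} in
lemma cpt_inj [CompactSpace X] [T2Space X] {a : ℝ} (ha : 0 < a) {x x' : X}
    (h : cpt X a x = cpt X a x') : x = x' := by
  refine eq_of_forall_apply fun f => ?_
  have := congrFun (congrArg Prod.snd h) f
  simp only [cpt] at this
  exact Subtype.ext (mul_left_cancel₀ ha.ne' this)


variable (Y : Type) [TopologicalSpace Y]

def prePhi : X ⊕ (X × Y × I) ⊕ Y → (ℝ × (C(X, I) → ℝ)) × (ℝ × (C(Y, I) → ℝ)) :=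
  Sum.elim (fun x => (cpt X 1 x, 0))
    (Sum.elim (fun p => (cpt X (1 - (p.2.2 : ℝ)) p.1, cpt Y (p.2.2 : ℝ) p.2.1))
      (fun y => (0, cpt Y 1 y)))

lemma prePhi_resp : ∀ a b, JoinRel X Y a b → prePhi X Y a = prePhi X Y b := by
  rintro _ _ (⟨x, y⟩ | ⟨x, y⟩) <;> simp [prePhi]

def phi : Join X Y → (ℝ × (C(X, I) → ℝ)) × (ℝ × (C(Y, I) → ℝ)) :=
  Quot.lift (prePhi X Y) (prePhi_resp X Y)

lemma phi_continuous : Continuous (phi X Y) := by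
  refine continuous_quot_lift _ ?_
  refine Continuous.sumElim ?_ (Continuous.sumElim ?_ ?_)
  · exact ((continuous_cpt X).comp (continuous_const.prodMk continuous_id)).prodMk
      continuous_const
  · refine Continuous.prodMk ?_ ?_
    · exact (continuous_cpt X).comp ((continuous_const.sub
        (continuous_subtype_val.comp (continuous_snd.comp continuous_snd))).prodMk
        continuous_fst)
    · exact (continuous_cpt Y).comp ((continuous_subtype_val.comp
        (continuous_snd.comp continuous_snd)).prodMk (continuous_fst.comp continuous_snd))
  · exact continuous_const.prodMk
      ((continuous_cpt Y).comp (continuous_const.prodMk continuous_id))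

lemma phi_mem (w : Join X Y) :
    InCone X (phi X Y w).1 ∧ InCone Y (phi X Y w).2 ∧
      (phi X Y w).1.1 + (phi X Y w).2.1 = 1 := by
  induction w using Quot.ind with
  | _ a =>
    rcases a with x | ⟨x, y, t⟩ | y
    · exact ⟨Or.inr ⟨1, x, zero_le_one, rfl⟩, InCone.zero Y, by simp [phi, prePhi]⟩
    · exact ⟨Or.inr ⟨1 - t, x, by simpa using t.2.2, rfl⟩,
        Or.inr ⟨t, y, t.2.1, rfl⟩, by simp [phi, prePhi]⟩
    · exact ⟨InCone.zero X, Or.inr ⟨1, y, zero_le_one, rfl⟩, by simp [phi, prePhi]⟩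

variable {X Y} in
lemma phi_inj [CompactSpace X] [T2Space X] [CompactSpace Y] [T2Space Y] :
    Function.Injective (phi X Y) := by
  have key : ∀ a b, phi X Y (Quot.mk _ a) = phi X Y (Quot.mk _ b) →
      Quot.mk (JoinRel X Y) a = Quot.mk (JoinRel X Y) b := by
    rintro (x | ⟨x, y, t⟩ | y) (x' | ⟨x', y', t'⟩ | y') h <;>
      simp only [phi, prePhi, Sum.elim_inl, Sum.elim_inr, Prod.mk.injEq] at h
    · -- inl / inl
      rw [cpt_inj one_pos h.1]
    · -- inl / mid
      have ht : (t' : ℝ) = 0 := by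
        have := congrArg Prod.fst h.1
        simp at this; linarith
      have ht' : t' = 0 := Subtype.ext ht
      subst ht'
      have hx : x = x' := by
        apply cpt_inj one_pos
        rw [h.1]; norm_num
      subst hx
      exact Quot.sound (JoinRel.left x y')
    · -- inl / inr : heights 1 = 0
      exfalso
      have := congrArg Prod.fst h.1
      simp at this
    · -- mid / inl
      have ht0 : t = 0 := by
        have := congrArg Prod.fst h.1
        simp at this; exact this
      subst ht0
      have hx : x = x' := by
        apply cpt_inj one_pos
        rw [← h.1]; norm_num
      subst hx
      exact (Quot.sound (JoinRel.left x y)).symm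
    · -- mid / mid
      have hts : (t : ℝ) = (t' : ℝ) := by
        have := congrArg Prod.fst h.2
        simpa using this
      have htt : t = t' := Subtype.ext hts
      subst htt
      by_cases h1 : (t : ℝ) = 1
      · have hy : y = y' := by
          apply cpt_inj (a := (t : ℝ)) (by rw [h1]; norm_num) h.2
        subst hy
        have ht1 : t = 1 := Subtype.ext h1
        subst ht1
        exact ((Quot.sound (JoinRel.right x y)).symm).trans
          (Quot.sound (JoinRel.right x' y))
      · have hx : x = x' := by
          refine cpt_inj (a := 1 - (t : ℝ)) ?_ h.1
          have := t.2.2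
          cases lt_or_eq_of_le this with
          | inl h => linarith
          | inr h => exact absurd h h1
        subst hx
        by_cases h0 : (t : ℝ) = 0
        · have ht0 : t = 0 := Subtype.ext h0
          subst ht0
          exact ((Quot.sound (JoinRel.left x y)).symm).trans
            (Quot.sound (JoinRel.left x y'))
        · have hy : y = y' := by
            refine cpt_inj (a := (t : ℝ)) ?_ h.2
            exact lt_of_le_of_ne t.2.1 (Ne.symm h0)
          subst hy
          rfl
    · -- mid / inr
      have ht : (t : ℝ) = 1 := by
        have := congrArg Prod.fst h.1
        simp at this; linarith
      have ht1 : t = 1 := Subtype.ext ht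
      subst ht1
      have hy : y = y' := by
        apply cpt_inj one_pos
        have := h.2
        rw [ht] at this
        exact this
      subst hy
      exact (Quot.sound (JoinRel.right x y)).symm
    · -- inr / inl
      exfalso
      have := congrArg Prod.fst h.1
      simp at this
    · -- inr / mid
      have ht : (t' : ℝ) = 1 := by
        have := congrArg Prod.fst h.1
        simp at this; linarith
      have ht1 : t' = 1 := Subtype.ext ht
      subst ht1
      have hy : y = y' := by
        apply cpt_inj one_pos
        have := h.2
        rw [ht] at this
        exact this
      subst hy
      exact Quot.sound (JoinRel.right x' y)
    · -- inr / inr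
      rw [cpt_inj one_pos h.2]
  intro u v
  induction u using Quot.ind with
  | _ a => induction v using Quot.ind with
    | _ b => exact key a b

lemma phi_surj (p : ℝ × (C(X, I) → ℝ)) (q : ℝ × (C(Y, I) → ℝ))
    (hp : InCone X p) (hq : InCone Y q) (hs : p.1 + q.1 = 1) :
    ∃ w, phi X Y w = (p, q) := by
  rcases hp with rfl | ⟨a, x, ha, rfl⟩
  · rcases hq with rfl | ⟨b, y, hb, rfl⟩
    · simp at hs
    · have hb1 : b = 1 := by simpa using hs
      subst hb1
      exact ⟨Quot.mk _ (Sum.inr (Sum.inr y)), rfl⟩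
  · rcases hq with rfl | ⟨b, y, hb, rfl⟩
    · have ha1 : a = 1 := by simpa using hs
      subst ha1
      exact ⟨Quot.mk _ (Sum.inl x), rfl⟩
    · simp only [cpt_fst] at hs
      have hb1 : b ≤ 1 := by linarith
      refine ⟨Quot.mk _ (Sum.inr (Sum.inl (x, y, ⟨b, hb, hb1⟩))), ?_⟩
      simp only [phi, prePhi, Sum.elim_inr, Sum.elim_inl]
      congr 1
      · congr 1
        linarith

instance joinCompact [CompactSpace X] [CompactSpace Y] : CompactSpace (Join X Y) := by
  constructor
  have hs : Set.range (Quot.mk (JoinRel X Y)) = Set.univ :=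
    Set.range_eq_univ.mpr (fun u => Quot.exists_rep u)
  change IsCompact (Set.univ : Set (Quot (JoinRel X Y))); rw [← hs]
  exact isCompact_range continuous_quot_mk

variable (Z : Type) [TopologicalSpace Z]

/-- The symmetric model of the triple join. -/
def S3 : Set ((ℝ × (C(X, I) → ℝ)) × (ℝ × (C(Y, I) → ℝ)) × (ℝ × (C(Z, I) → ℝ))) :=
  {p | InCone X p.1 ∧ InCone Y p.2.1 ∧ InCone Z p.2.2 ∧ p.1.1 + p.2.1.1 + p.2.2.1 = 1}

def prePsi : Join X Y ⊕ ((Join X Y) × Z × I) ⊕ Z →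
    (ℝ × (C(X, I) → ℝ)) × (ℝ × (C(Y, I) → ℝ)) × (ℝ × (C(Z, I) → ℝ)) :=
  Sum.elim (fun w => ((phi X Y w).1, (phi X Y w).2, 0))
    (Sum.elim
      (fun p => ((1 - (p.2.2 : ℝ)) • (phi X Y p.1).1,
        (1 - (p.2.2 : ℝ)) • (phi X Y p.1).2, cpt Z (p.2.2 : ℝ) p.2.1))
      (fun z => (0, 0, cpt Z 1 z)))

lemma prePsi_resp : ∀ a b, JoinRel (Join X Y) Z a b → prePsi X Y Z a = prePsi X Y Z b := by
  rintro _ _ (⟨w, z⟩ | ⟨w, z⟩) <;> simp [prePsi]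

def psi0 : Join (Join X Y) Z →
    (ℝ × (C(X, I) → ℝ)) × (ℝ × (C(Y, I) → ℝ)) × (ℝ × (C(Z, I) → ℝ)) :=
  Quot.lift (prePsi X Y Z) (prePsi_resp X Y Z)

lemma psi0_continuous : Continuous (psi0 X Y Z) := by
  refine continuous_quot_lift _ ?_
  refine Continuous.sumElim ?_ (Continuous.sumElim ?_ ?_)
  · exact (continuous_fst.comp (phi_continuous X Y)).prodMk
      ((continuous_snd.comp (phi_continuous X Y)).prodMk continuous_const)
  · have hc : Continuous fun p : (Join X Y) × Z × I => (1 - (p.2.2 : ℝ)) :=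
      continuous_const.sub (continuous_subtype_val.comp (continuous_snd.comp continuous_snd))
    have hphi : Continuous fun p : (Join X Y) × Z × I => phi X Y p.1 :=
      (phi_continuous X Y).comp continuous_fst
    refine Continuous.prodMk (hc.smul (continuous_fst.comp hphi)) ?_
    refine Continuous.prodMk (hc.smul (continuous_snd.comp hphi)) ?_
    exact (continuous_cpt Z).comp ((continuous_subtype_val.comp
      (continuous_snd.comp continuous_snd)).prodMk (continuous_fst.comp continuous_snd))
  · exact continuous_const.prodMk (continuous_const.prodMk
      ((continuous_cpt Z).comp (continuous_const.prodMk continuous_id)))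

lemma psi0_mem (u : Join (Join X Y) Z) : psi0 X Y Z u ∈ S3 X Y Z := by
  induction u using Quot.ind with
  | _ a =>
    rcases a with w | ⟨w, z, t⟩ | z
    · obtain ⟨h1, h2, h3⟩ := phi_mem X Y w
      exact ⟨h1, h2, InCone.zero Z, by simpa [psi0, prePsi] using h3⟩
    · obtain ⟨h1, h2, h3⟩ := phi_mem X Y w
      have ht : (0:ℝ) ≤ 1 - (t : ℝ) := by simpa using t.2.2
      refine ⟨h1.smul X ht, h2.smul Y ht, Or.inr ⟨t, z, t.2.1, rfl⟩, ?_⟩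
      simp only [psi0, prePsi, Sum.elim_inr, Sum.elim_inl, Prod.smul_fst, smul_eq_mul, cpt_fst]
      linear_combination (1 - (t : ℝ)) * h3
    · exact ⟨InCone.zero X, InCone.zero Y, Or.inr ⟨1, z, zero_le_one, rfl⟩, by simp [psi0, prePsi]⟩

variable {X Y Z} in
lemma psi0_inj [CompactSpace X] [T2Space X] [CompactSpace Y] [T2Space Y]
    [CompactSpace Z] [T2Space Z] : Function.Injective (psi0 X Y Z) := by
  have key : ∀ a b, psi0 X Y Z (Quot.mk _ a) = psi0 X Y Z (Quot.mk _ b) →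
      Quot.mk (JoinRel (Join X Y) Z) a = Quot.mk (JoinRel (Join X Y) Z) b := by
    rintro (w | ⟨w, z, t⟩ | z) (w' | ⟨w', z', t'⟩ | z') h <;>
      simp only [psi0, prePsi, Sum.elim_inl, Sum.elim_inr, Prod.mk.injEq] at h
    · -- inl / inl
      have : phi X Y w = phi X Y w' := Prod.ext h.1 h.2.1
      rw [phi_inj this]
    · -- inl / mid
      have ht : (t' : ℝ) = 0 := by
        have := congrArg Prod.fst h.2.2
        simpa using this.symm
      rw [ht] at h
      have : phi X Y w = phi X Y w' := by
        refine Prod.ext ?_ ?_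
        · rw [h.1]; norm_num
        · rw [h.2.1]; norm_num
      rw [phi_inj this]
      have ht0 : t' = 0 := Subtype.ext ht
      subst ht0
      exact Quot.sound (JoinRel.left w' z')
    · -- inl / inr
      exfalso
      have := congrArg Prod.fst h.2.2
      simp at this
    · -- mid / inl
      have ht : (t : ℝ) = 0 := by
        have := congrArg Prod.fst h.2.2
        simpa using this
      rw [ht] at h
      have : phi X Y w = phi X Y w' := by
        refine Prod.ext ?_ ?_
        · rw [← h.1]; norm_num
        · rw [← h.2.1]; norm_num
      rw [phi_inj this]
      have ht0 : t = 0 := Subtype.ext ht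
      subst ht0
      exact (Quot.sound (JoinRel.left w' z)).symm
    · -- mid / mid
      have hts : (t : ℝ) = (t' : ℝ) := by
        have := congrArg Prod.fst h.2.2
        simpa using this
      have htt : t = t' := Subtype.ext hts
      subst htt
      by_cases h1 : (t : ℝ) = 1
      · have hz : z = z' := by
          refine cpt_inj (a := (t : ℝ)) (by rw [h1]; norm_num) h.2.2
        subst hz
        have ht1 : t = 1 := Subtype.ext h1
        subst ht1
        exact ((Quot.sound (JoinRel.right w z)).symm).trans
          (Quot.sound (JoinRel.right w' z))
      · have hne : (1 - (t : ℝ)) ≠ 0 := by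
          have := t.2.2
          intro hcon
          apply h1
          linarith
        have hw : w = w' := by
          apply phi_inj
          refine Prod.ext ?_ ?_
          · exact smul_right_injective _ hne h.1
          · exact smul_right_injective _ hne h.2.1
        subst hw
        by_cases h0 : (t : ℝ) = 0
        · have ht0 : t = 0 := Subtype.ext h0
          subst ht0
          exact ((Quot.sound (JoinRel.left w z)).symm).trans
            (Quot.sound (JoinRel.left w z'))
        · have hz : z = z' := by
            refine cpt_inj (a := (t : ℝ)) (lt_of_le_of_ne t.2.1 (Ne.symm h0)) h.2.2
          subst hz
          rfl
    · -- mid / inr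
      have ht : (t : ℝ) = 1 := by
        have := congrArg Prod.fst h.2.2
        simpa using this
      have hz : z = z' := by
        refine cpt_inj one_pos ?_
        have := h.2.2
        rw [ht] at this
        exact this
      subst hz
      have ht1 : t = 1 := Subtype.ext ht
      subst ht1
      exact (Quot.sound (JoinRel.right w z)).symm
    · -- inr / inl
      exfalso
      have := congrArg Prod.fst h.2.2
      simp at this
    · -- inr / mid
      have ht : (t' : ℝ) = 1 := by
        have := congrArg Prod.fst h.2.2
        simpa using this.symm
      have hz : z = z' := by
        refine cpt_inj one_pos ?_
        have := h.2.2
        rw [ht] at this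
        exact this
      subst hz
      have ht1 : t' = 1 := Subtype.ext ht
      subst ht1
      exact Quot.sound (JoinRel.right w' z)
    · -- inr / inr
      rw [cpt_inj one_pos h.2.2]
  intro u v
  induction u using Quot.ind with
  | _ a => induction v using Quot.ind with
    | _ b => exact key a b

lemma psi0_surj (p) (hp : p ∈ S3 X Y Z) : ∃ u, psi0 X Y Z u = p := by
  obtain ⟨p, q, r⟩ := p
  obtain ⟨hp, hq, hr, hs⟩ := hp
  simp only at hs
  simp only at hp hq
  rcases hr with hr0 | ⟨c, z, hc, rfl⟩
  · obtain rfl : r = 0 := hr0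
    simp only [Prod.fst_zero, add_zero] at hs
    obtain ⟨w, hw⟩ := phi_surj X Y p q hp hq hs
    refine ⟨Quot.mk _ (Sum.inl w), ?_⟩
    simp only [psi0, prePsi, Sum.elim_inl, hw]
  · simp only [cpt_fst] at hs
    by_cases hc1 : c = 1
    · subst hc1
      have hp1 : p.1 = 0 := by
        have := hp.fst_nonneg X
        have := hq.fst_nonneg Y
        linarith
      have hq1 : q.1 = 0 := by
        have := hp.fst_nonneg X
        have := hq.fst_nonneg Y
        linarith
      obtain rfl : p = 0 := hp.eq_zero X hp1
      obtain rfl : q = 0 := hq.eq_zero Y hq1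
      exact ⟨Quot.mk _ (Sum.inr (Sum.inr z)), rfl⟩
    · have hcle : c ≤ 1 := by
        have := hp.fst_nonneg X
        have := hq.fst_nonneg Y
        linarith
      have hclt : c < 1 := lt_of_le_of_ne hcle hc1
      have hspos : (0:ℝ) < 1 - c := by linarith
      have hinv : (0:ℝ) ≤ (1 - c)⁻¹ := le_of_lt (inv_pos.2 hspos)
      have hsum : ((1 - c)⁻¹ • p).1 + ((1 - c)⁻¹ • q).1 = 1 := by
        simp only [Prod.smul_fst, smul_eq_mul]
        have hpq : p.1 + q.1 = 1 - c := by linarith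
        rw [← mul_add, hpq, inv_mul_cancel₀ (ne_of_gt hspos)]
      obtain ⟨w, hw⟩ := phi_surj X Y ((1 - c)⁻¹ • p) ((1 - c)⁻¹ • q)
        (hp.smul X hinv) (hq.smul Y hinv) hsum
      refine ⟨Quot.mk _ (Sum.inr (Sum.inl (w, z, ⟨c, hc, hcle⟩))), ?_⟩
      simp only [psi0, prePsi, Sum.elim_inr, Sum.elim_inl, hw]
      have hcancel : ∀ (M : Type) [AddCommGroup M] [Module ℝ M] (v : M),
          (1 - c) • ((1 - c)⁻¹ • v) = v := by
        intro M _ _ v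
        rw [smul_smul, mul_inv_cancel₀ (ne_of_gt hspos), one_smul]
      rw [hcancel _ p, hcancel _ q]

variable [CompactSpace X] [T2Space X] [CompactSpace Y] [T2Space Y]
  [CompactSpace Z] [T2Space Z]

def psiEquiv : Join (Join X Y) Z ≃ ↥(S3 X Y Z) :=
  Equiv.ofBijective (fun u => ⟨psi0 X Y Z u, psi0_mem X Y Z u⟩)
    ⟨fun a b h => psi0_inj (congrArg Subtype.val h), fun p => by
      obtain ⟨u, hu⟩ := psi0_surj X Y Z p.1 p.2
      exact ⟨u, Subtype.ext hu⟩⟩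

def J3homeo : Join (Join X Y) Z ≃ₜ ↥(S3 X Y Z) :=
  Continuous.homeoOfEquivCompactToT2 (f := psiEquiv X Y Z)
    ((psi0_continuous X Y Z).subtype_mk _)

def permHomeo : ↥(S3 Y Z X) ≃ₜ ↥(S3 X Y Z) where
  toFun p := ⟨(p.1.2.2, p.1.1, p.1.2.1), by
    obtain ⟨h1, h2, h3, h4⟩ := p.2
    exact ⟨h3, h1, h2, by simp only at h4 ⊢; linarith⟩⟩
  invFun p := ⟨(p.1.2.1, p.1.2.2, p.1.1), by
    obtain ⟨h1, h2, h3, h4⟩ := p.2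
    exact ⟨h2, h3, h1, by simp only at h4 ⊢; linarith⟩⟩
  left_inv p := rfl
  right_inv p := rfl
  continuous_toFun := by
    refine Continuous.subtype_mk ?_ _
    exact ((continuous_snd.comp (continuous_snd.comp continuous_subtype_val))).prodMk
      ((continuous_fst.comp continuous_subtype_val).prodMk
        (continuous_fst.comp (continuous_snd.comp continuous_subtype_val)))
  continuous_invFun := by
    refine Continuous.subtype_mk ?_ _
    exact ((continuous_fst.comp (continuous_snd.comp continuous_subtype_val))).prodMk
      ((continuous_snd.comp (continuous_snd.comp continuous_subtype_val)).prodMk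
        (continuous_fst.comp continuous_subtype_val))

end JA

section Comm

variable (A B : Type) [TopologicalSpace A] [TopologicalSpace B]

def preComm : A ⊕ (A × B × I) ⊕ B → Join B A :=
  Sum.elim (fun a => Quot.mk _ (Sum.inr (Sum.inr a)))
    (Sum.elim
      (fun p => Quot.mk _ (Sum.inr (Sum.inl (p.2.1, p.1, unitInterval.symm p.2.2))))
      (fun b => Quot.mk _ (Sum.inl b)))

lemma preComm_resp : ∀ a b, JoinRel A B a b → preComm A B a = preComm A B b := by
  rintro _ _ (⟨x, y⟩ | ⟨x, y⟩)
  · show Quot.mk _ (Sum.inr (Sum.inr x)) =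
      Quot.mk _ (Sum.inr (Sum.inl (y, x, unitInterval.symm 0)))
    rw [unitInterval.symm_zero]
    exact Quot.sound (JoinRel.right y x)
  · show Quot.mk _ (Sum.inl y) =
      Quot.mk _ (Sum.inr (Sum.inl (y, x, unitInterval.symm 1)))
    rw [unitInterval.symm_one]
    exact Quot.sound (JoinRel.left y x)

def commMap : Join A B → Join B A :=
  Quot.lift (preComm A B) (preComm_resp A B)

lemma commMap_continuous : Continuous (commMap A B) := by
  refine continuous_quot_lift _ ?_
  refine Continuous.sumElim (continuous_quot_mk.comp (continuous_inr.comp continuous_inr))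
    (Continuous.sumElim ?_ (continuous_quot_mk.comp continuous_inl))
  refine continuous_quot_mk.comp (continuous_inr.comp (continuous_inl.comp ?_))
  exact (continuous_fst.comp continuous_snd).prodMk
    (continuous_fst.prodMk
      (unitInterval.continuous_symm.comp (continuous_snd.comp continuous_snd)))

lemma commMap_commMap (u : Join A B) : commMap B A (commMap A B u) = u := by
  induction u using Quot.ind with
  | _ a =>
    rcases a with a | ⟨a, b, t⟩ | b
    · rfl
    · show Quot.mk _ (Sum.inr (Sum.inl (a, b, unitInterval.symm (unitInterval.symm t)))) =
        Quot.mk _ (Sum.inr (Sum.inl (a, b, t)))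
      rw [unitInterval.symm_symm]
    · rfl

def joinComm : Join A B ≃ₜ Join B A where
  toFun := commMap A B
  invFun := commMap B A
  left_inv := commMap_commMap A B
  right_inv := commMap_commMap B A
  continuous_toFun := commMap_continuous A B
  continuous_invFun := commMap_continuous B A

end Comm

/-- The join is associative up to homeomorphism for compact Hausdorff spaces. -/
theorem stmt6 (X Y Z : Type)
    [TopologicalSpace X] [CompactSpace X] [T2Space X]
    [TopologicalSpace Y] [CompactSpace Y] [T2Space Y]
    [TopologicalSpace Z] [CompactSpace Z] [T2Space Z] :
    Nonempty (Join (Join X Y) Z ≃ₜ Join X (Join Y Z)) := by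
  exact ⟨(JA.J3homeo X Y Z).trans
    (((joinComm X (Join Y Z)).trans
      ((JA.J3homeo Y Z X).trans (JA.permHomeo X Y Z))).symm)⟩
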